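/- Let (E, d) be a complete metric space and let (u_i)_{i∈ℕ} be a sequence of pairwise distinct points of E whose range is dense in E. Suppose a sequence (δ_i)_{i∈ℕ} of real numbers satisfies: (A1) δ_i ≥ 0 for all i; (A2) inf_{i} δ_i = 0; (A3) for all i, j, |δ_i − δ_j| ≤ d(u_i, u_j) ≤ δ_i + δ_j. Then there exists a unique point y ∈ E such that d(y, u_i) = δ_i for all i ∈ ℕ. -/

import Mathlib

/-- In a complete metric space `E` with a dense sequence `u` of pairwise
distinct points, any real sequence `δ` satisfying (A1)-(A3) is the sequence of distances
from a unique point `y` of `E` to the points `u i`. -/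
theorem exists_unique_point_of_dist_sequence
    {E : Type*} [MetricSpace E] [CompleteSpace E]
    (u : ℕ → E) (hu_inj : Function.Injective u) (hu_dense : DenseRange u)
    (δ : ℕ → ℝ)
    (hA1 : ∀ i, 0 ≤ δ i)
    (hA2 : (⨅ i, δ i) = 0)
    (hA3 : ∀ i j, |δ i - δ j| ≤ dist (u i) (u j) ∧ dist (u i) (u j) ≤ δ i + δ j) :
    ∃! y : E, ∀ i, dist y (u i) = δ i := by
  have hbdd : BddBelow (Set.range δ) := ⟨0, by rintro x ⟨i, rfl⟩; exact hA1 i⟩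
  have hex : ∀ ε : ℝ, 0 < ε → ∃ i, δ i < ε := by
    intro ε hε
    have : (⨅ i, δ i) < ε := by rw [hA2]; exact hε
    exact exists_lt_of_ciInf_lt this
  -- choose subsequence with δ small
  have hch : ∀ k : ℕ, ∃ i, δ i < 1 / (k + 1) := fun k =>
    hex _ (by positivity)
  choose n hn using hch
  have hδn0 : Filter.Tendsto (fun k => δ (n k)) Filter.atTop (nhds 0) := by
    apply squeeze_zero (fun k => hA1 (n k)) (fun k => (hn k).le)
    exact tendsto_one_div_add_atTop_nhds_zero_nat
  have hcauchy : CauchySeq (fun k => u (n k)) := by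
    refine cauchySeq_of_le_tendsto_0 (fun N => 2 / (N + 1)) ?_ ?_
    · intro a b N ha hb
      have h1 : δ (n a) < 1 / (N + 1) :=
        (hn a).trans_le (by
          apply one_div_le_one_div_of_le (by positivity)
          exact_mod_cast Nat.succ_le_succ ha)
      have h2 : δ (n b) < 1 / (N + 1) :=
        (hn b).trans_le (by
          apply one_div_le_one_div_of_le (by positivity)
          exact_mod_cast Nat.succ_le_succ hb)
      have := (hA3 (n a) (n b)).2
      have : dist (u (n a)) (u (n b)) ≤ δ (n a) + δ (n b) := this
      show dist (u (n a)) (u (n b)) ≤ 2 / (N + 1)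
      have hq : 2 / ((N : ℝ) + 1) = 1 / (N + 1) + 1 / (N + 1) := by ring
      linarith
    · have : Filter.Tendsto (fun N : ℕ => 1 / ((N : ℝ) + 1)) Filter.atTop (nhds 0) :=
        tendsto_one_div_add_atTop_nhds_zero_nat
      have h2 := this.const_mul (2 : ℝ)
      simpa [div_eq_mul_inv] using h2
  obtain ⟨y, hy⟩ := cauchySeq_tendsto_of_complete hcauchy
  have hdist : ∀ i, dist y (u i) = δ i := by
    intro i
    have h1 : Filter.Tendsto (fun k => dist (u (n k)) (u i)) Filter.atTop
        (nhds (dist y (u i))) := (hy.dist tendsto_const_nhds)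
    have h2 : Filter.Tendsto (fun k => dist (u (n k)) (u i)) Filter.atTop (nhds (δ i)) := by
      have hlo : Filter.Tendsto (fun k => δ i - δ (n k)) Filter.atTop (nhds (δ i)) := by
        simpa using (tendsto_const_nhds (x := δ i)).sub hδn0
      have hhi : Filter.Tendsto (fun k => δ (n k) + δ i) Filter.atTop (nhds (δ i)) := by
        simpa using hδn0.add (tendsto_const_nhds (x := δ i))
      apply tendsto_of_tendsto_of_tendsto_of_le_of_le hlo hhi
      · intro k
        have := (hA3 (n k) i).1
        have := abs_le.mp this
        show δ i - δ (n k) ≤ dist (u (n k)) (u i)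
        linarith [this.1]
      · intro k
        show dist (u (n k)) (u i) ≤ δ (n k) + δ i
        exact (hA3 (n k) i).2
    exact tendsto_nhds_unique h1 h2
  refine ⟨y, hdist, ?_⟩
  intro z hz
  have hle : ∀ i, dist z y ≤ 2 * δ i := by
    intro i
    calc dist z y ≤ dist z (u i) + dist (u i) y := dist_triangle _ _ _
    _ = δ i + δ i := by rw [hz i, dist_comm, hdist i]
    _ = 2 * δ i := by ring
  have : dist z y ≤ 0 := by
    have : dist z y / 2 ≤ ⨅ i, δ i := le_ciInf fun i => by linarith [hle i]
    rw [hA2] at this; linarith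
  have := dist_nonneg (x := z) (y := y)
  exact dist_le_zero.mp (by linarith)
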